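/- Let b_1,…,b_ℓ, d ∈ ℕ and j ∈ ℕ, and set N = ℓ+j+1. Define the cooperative game on players {1,…,N} with utility ν(C) = 1 if N ∈ C, C ∩ {ℓ+1,…,ℓ+j} = ∅, and Σ_{i ∈ C ∩ {1,…,ℓ}} b_i ≤ d, and ν(C) = 0 otherwise. Then Shapley(N, ν) = Σ_{k=0}^{ℓ} ( k! · (ℓ+j−k)! / (ℓ+j+1)! ) · s_k, where s_k = #{C ⊆ {1,…,ℓ} : |C| = k and Σ_{i∈C} b_i ≤ d}. -/
import Mathlib


open Finset

/-- The Shapley value of player `p` in the cooperative game on players `{1, …, N}` with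
utility `ν`:  `Shapley(p, ν) = ∑_{C ⊆ P ∖ {p}} (|C|! (N−|C|−1)! / N!) (ν(C ∪ {p}) − ν(C))`. -/
noncomputable def shapley (N : ℕ) (ν : Finset (Fin N) → ℝ) (p : Fin N) : ℝ :=
  ∑ C ∈ (Finset.univ.erase p).powerset,
    ((Nat.factorial C.card * Nat.factorial (N - C.card - 1) : ℝ) / Nat.factorial N) *
      (ν (insert p C) - ν C)

/-- In the knapsack game on `N = ℓ + j + 1` players (items `1, …, ℓ` with
weights `b`, dummy players `ℓ+1, …, ℓ+j`, and the capacity as player `N`), where a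
coalition has utility `1` iff it contains player `N`, avoids all dummies, and the total
weight of its items is at most `d`, the Shapley value of player `N` equals
`∑_{k=0}^{ℓ} (k! (ℓ+j−k)! / (ℓ+j+1)!) s_k`, where `s_k` is the number of `k`-element item
sets of weight at most `d`. -/
theorem stmt_11 (ℓ j d : ℕ) (b : Fin ℓ → ℕ)
    (ν : Finset (Fin (ℓ + j + 1)) → ℝ)
    (hν : ∀ C, ν C =
      if (Fin.last (ℓ + j) ∈ C ∧
          (∀ q ∈ C, ¬(ℓ ≤ (q : ℕ) ∧ (q : ℕ) < ℓ + j)) ∧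
          (∑ q ∈ C, if h : (q : ℕ) < ℓ then b ⟨(q : ℕ), h⟩ else 0) ≤ d)
        then (1 : ℝ) else 0) :
    shapley (ℓ + j + 1) ν (Fin.last (ℓ + j)) =
      ∑ k ∈ Finset.range (ℓ + 1),
        ((Nat.factorial k * Nat.factorial (ℓ + j - k) : ℝ) / Nat.factorial (ℓ + j + 1)) *
          (((Finset.univ : Finset (Finset (Fin ℓ))).filter
              (fun C => C.card = k ∧ ∑ i ∈ C, b i ≤ d)).card : ℝ) := by
  classical
  have hle : ℓ ≤ ℓ + j + 1 := by omega
  set e : Fin ℓ ↪ Fin (ℓ + j + 1) := ⟨Fin.castLE hle, Fin.castLE_injective hle⟩ with he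
  have heval : ∀ i : Fin ℓ, ((e i : Fin (ℓ + j + 1)) : ℕ) = (i : ℕ) := fun i => rfl
  have hmapw : ∀ C : Finset (Fin ℓ),
      (∑ q ∈ C.map e, if h : (q : ℕ) < ℓ then b ⟨(q : ℕ), h⟩ else 0) = ∑ i ∈ C, b i := by
    intro C
    rw [Finset.sum_map]
    refine Finset.sum_congr rfl fun i _ => ?_
    rw [dif_pos ((heval i) ▸ i.isLt)]
    exact congrArg b (Fin.ext (heval i))
  -- elements of good coalitions have value < ℓ, and such coalitions lift back
  have hval : ∀ C : Finset (Fin (ℓ + j + 1)),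
      C ⊆ Finset.univ.erase (Fin.last (ℓ + j)) →
      (∀ q ∈ C, ¬(ℓ ≤ (q : ℕ) ∧ (q : ℕ) < ℓ + j)) →
      ∀ q ∈ C, (q : ℕ) < ℓ := by
    intro C hsub hnd q hq
    have h1 := hnd q hq
    have h2 : q ≠ Fin.last (ℓ + j) := (Finset.mem_erase.mp (hsub hq)).1
    have h3 : (q : ℕ) < ℓ + j + 1 := q.isLt
    have h4 : (q : ℕ) ≠ ℓ + j := fun h => h2 (Fin.ext h)
    omega
  have hmap : ∀ C : Finset (Fin (ℓ + j + 1)), (∀ q ∈ C, (q : ℕ) < ℓ) →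
      (Finset.univ.filter (fun i : Fin ℓ => e i ∈ C)).map e = C := by
    intro C hv
    ext q
    simp only [Finset.mem_map, Finset.mem_filter, Finset.mem_univ, true_and]
    constructor
    · rintro ⟨i, hi, rfl⟩; exact hi
    · intro hq
      have hq' : e ⟨(q : ℕ), hv q hq⟩ = q := Fin.ext rfl
      exact ⟨⟨(q : ℕ), hv q hq⟩, by rw [hq']; exact hq, hq'⟩
  -- Step 1: rewrite the Shapley sum as a sum over feasible coalitions
  have key : shapley (ℓ + j + 1) ν (Fin.last (ℓ + j)) =
      ∑ C ∈ Finset.univ.filter (fun C : Finset (Fin ℓ) => ∑ i ∈ C, b i ≤ d),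
        ((Nat.factorial C.card * Nat.factorial (ℓ + j - C.card) : ℝ) /
          Nat.factorial (ℓ + j + 1)) := by
    unfold shapley
    have step1 : ∀ C ∈ (Finset.univ.erase (Fin.last (ℓ + j))).powerset,
        ((Nat.factorial C.card * Nat.factorial (ℓ + j + 1 - C.card - 1) : ℝ) /
            Nat.factorial (ℓ + j + 1)) * (ν (insert (Fin.last (ℓ + j)) C) - ν C)
        = if ((∀ q ∈ C, ¬(ℓ ≤ (q : ℕ) ∧ (q : ℕ) < ℓ + j)) ∧
              (∑ q ∈ C, if h : (q : ℕ) < ℓ then b ⟨(q : ℕ), h⟩ else 0) ≤ d)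
          then ((Nat.factorial C.card * Nat.factorial (ℓ + j - C.card) : ℝ) /
              Nat.factorial (ℓ + j + 1)) else 0 := by
      intro C hC
      rw [Finset.mem_powerset] at hC
      have hlast : Fin.last (ℓ + j) ∉ C := fun h =>
        (Finset.mem_erase.mp (hC h)).1 rfl
      have hcard : C.card ≤ ℓ + j := by
        have h1 := Finset.card_le_card hC
        have h2 : (Finset.univ.erase (Fin.last (ℓ + j))).card = ℓ + j := by
          rw [Finset.card_erase_of_mem (Finset.mem_univ _), Finset.card_univ,
            Fintype.card_fin]
          omega
        omega
      have hsub : ℓ + j + 1 - C.card - 1 = ℓ + j - C.card := by omega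
      rw [hsub]
      have hνC : ν C = 0 := by
        rw [hν]; exact if_neg (fun h => hlast h.1)
      have hsum : (∑ q ∈ insert (Fin.last (ℓ + j)) C,
          if h : (q : ℕ) < ℓ then b ⟨(q : ℕ), h⟩ else 0)
          = ∑ q ∈ C, if h : (q : ℕ) < ℓ then b ⟨(q : ℕ), h⟩ else 0 := by
        rw [Finset.sum_insert hlast, dif_neg (by simp only [Fin.val_last]; omega)]
        simp
      have hνins : ν (insert (Fin.last (ℓ + j)) C) =
          if ((∀ q ∈ C, ¬(ℓ ≤ (q : ℕ) ∧ (q : ℕ) < ℓ + j)) ∧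
              (∑ q ∈ C, if h : (q : ℕ) < ℓ then b ⟨(q : ℕ), h⟩ else 0) ≤ d)
          then (1 : ℝ) else 0 := by
        rw [hν]
        refine if_congr ?_ rfl rfl
        constructor
        · rintro ⟨-, h2, h3⟩
          rw [hsum] at h3
          exact ⟨fun q hq => h2 q (Finset.mem_insert_of_mem hq), h3⟩
        · rintro ⟨h2, h3⟩
          refine ⟨Finset.mem_insert_self _ _, ?_, by rw [hsum]; exact h3⟩
          intro q hq
          rcases Finset.mem_insert.mp hq with rfl | hq
          · simp only [Fin.val_last]; omega
          · exact h2 q hq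
      rw [hνC, hνins, sub_zero]
      split <;> simp
    rw [Finset.sum_congr rfl step1, Finset.sum_ite, Finset.sum_const_zero, add_zero]
    refine Finset.sum_nbij' (fun C => Finset.univ.filter (fun i : Fin ℓ => e i ∈ C))
      (fun C => C.map e) ?_ ?_ ?_ ?_ ?_
    · intro C hC
      simp only [Finset.mem_filter, Finset.mem_powerset] at hC ⊢
      obtain ⟨hsub, hnd, hw⟩ := hC
      refine ⟨Finset.mem_univ _, ?_⟩
      rw [← hmapw, hmap C (hval C hsub hnd)]; exact hw
    · intro C hC
      simp only [Finset.mem_filter, Finset.mem_powerset, Finset.mem_univ, true_and] at hC ⊢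
      refine ⟨?_, ?_, ?_⟩
      · intro q hq
        rw [Finset.mem_map] at hq
        obtain ⟨i, -, rfl⟩ := hq
        rw [Finset.mem_erase]
        refine ⟨fun h => ?_, Finset.mem_univ _⟩
        have h1 := heval i
        rw [h] at h1
        have h2 := i.isLt
        simp [Fin.last] at h1
        omega
      · intro q hq
        rw [Finset.mem_map] at hq
        obtain ⟨i, -, rfl⟩ := hq
        rw [heval]
        have := i.isLt
        omega
      · rw [hmapw]; exact hC
    · intro C hC
      simp only [Finset.mem_filter, Finset.mem_powerset] at hC
      exact hmap C (hval C hC.1 hC.2.1)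
    · intro C hC
      ext i
      simp [Finset.mem_map, e.injective.eq_iff]
    · intro C hC
      simp only [Finset.mem_filter, Finset.mem_powerset] at hC
      have h1 : (Finset.univ.filter (fun i : Fin ℓ => e i ∈ C)).card = C.card := by
        conv_rhs => rw [← hmap C (hval C hC.1 hC.2.1)]
        rw [Finset.card_map]
      rw [h1]
  rw [key]
  -- Step 2: group by cardinality
  have hmaps : ∀ C ∈ Finset.univ.filter (fun C : Finset (Fin ℓ) => ∑ i ∈ C, b i ≤ d),
      C.card ∈ Finset.range (ℓ + 1) := by
    intro C _
    rw [Finset.mem_range]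
    have := Finset.card_le_card (Finset.subset_univ C)
    rw [Finset.card_univ, Fintype.card_fin] at this
    omega
  rw [← Finset.sum_fiberwise_of_maps_to hmaps]
  refine Finset.sum_congr rfl fun k hk => ?_
  have hfe : (Finset.univ.filter (fun C : Finset (Fin ℓ) => ∑ i ∈ C, b i ≤ d)).filter
      (fun C => C.card = k)
      = Finset.univ.filter (fun C : Finset (Fin ℓ) => C.card = k ∧ ∑ i ∈ C, b i ≤ d) := by
    rw [Finset.filter_filter]
    exact Finset.filter_congr fun C _ => by tauto
  rw [hfe]
  have hconst : ∀ C ∈ Finset.univ.filter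
      (fun C : Finset (Fin ℓ) => C.card = k ∧ ∑ i ∈ C, b i ≤ d),
      ((Nat.factorial C.card * Nat.factorial (ℓ + j - C.card) : ℝ) /
        Nat.factorial (ℓ + j + 1))
      = ((Nat.factorial k * Nat.factorial (ℓ + j - k) : ℝ) / Nat.factorial (ℓ + j + 1)) := by
    intro C hC
    rw [(Finset.mem_filter.mp hC).2.1]
  rw [Finset.sum_congr rfl hconst, Finset.sum_const, nsmul_eq_mul, mul_comm]
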